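/- Any two star classes in H₁(B₂(K₃,₃)) are equal regardless of choice of vertex, half-edges, and orientation; in particular, every star class in H₁(B₂(K₃,₃)) is 2-torsion. -/
import Mathlib


/-!
A combinatorial model of the Świątkowski chain complex of a finite graph
(finite CW-complex of dimension ≤ 1), computing the homology of its unordered
configuration spaces (An–Drummond-Cole–Knudsen).

A graph is given by a vertex type `V`, an edge type `E` and an endpoint map
`ends : E → V × V` (self-loops and multiple edges are allowed).  A half-edge is
a pair `(e, b) : E × Bool`, whose vertex is the corresponding endpoint of `e`.

We work with the ℤ-basis of the Świątkowski complex consisting of a monomial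
`m : E →₀ ℕ` in the edges together with a choice, for each vertex `v`, of a
local generator from `S(v) = ℤ⟨∅, v, h ∈ H(v)⟩`: a half-edge at `v`
(`Sum.inl`), the vertex itself (`Sum.inr true`), or `∅` (`Sum.inr false`).
The differential is the ℤ[E]-linear derivation with `∂h = e(h) - v(h)`,
with Koszul signs determined by a fixed enumeration of the vertices.
`degB` is the homological degree (number of half-edge factors) and `wtB` is the
weight (number of particles).  `hasDW i k` is the subgroup of chains of pure
degree `i` and weight `k`; `cyc i k` the corresponding cycles, `bdry i k` the
boundaries of degree/weight `(i+1, k)` chains, and `Hgr i k` their quotient,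
which is `H_i(B_k Γ)`.  `stab e` is edge stabilization (multiplication by `e`).
-/

namespace Swiatkowski

variable {V E : Type} [Fintype V] [Fintype E] [DecidableEq V] [DecidableEq E]

/-- The vertex of a half-edge. -/
def vtx (ends : E → V × V) (h : E × Bool) : V :=
  cond h.2 (ends h.1).2 (ends h.1).1

/-- The local generators at a vertex `v`: a half-edge at `v`, or the vertex
generator (`true`), or `∅` (`false`). -/
abbrev VGen (ends : E → V × V) (v : V) : Type :=
  {h : E × Bool // vtx ends h = v} ⊕ Bool

/-- A choice of local generator at every vertex. -/
abbrev States (ends : E → V × V) : Type := ∀ v : V, VGen ends v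

/-- The ℤ-basis of the Świątkowski complex: an edge monomial together with a
state. -/
abbrev Bas (ends : E → V × V) : Type := (E →₀ ℕ) × States ends

/-- The underlying ℤ-module of the Świątkowski complex. -/
abbrev SC (ends : E → V × V) : Type := Bas ends →₀ ℤ

variable (ends : E → V × V)

/-- An enumeration of the vertices, used for Koszul signs. -/
noncomputable def idx : V → ℕ := fun v => ((Fintype.equivFin V) v : ℕ)

/-- The Koszul sign of the half-edge slot at `v` inside the state `f`. -/
noncomputable def sgn (f : States ends) (v : V) : ℤ :=
  (-1) ^ (Finset.univ.filter fun w => idx w < idx v ∧ (f w).isLeft = true).card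

/-- Homological degree of a basis element: its number of half-edge factors. -/
def degB (b : Bas ends) : ℕ :=
  (Finset.univ.filter fun v => (b.2 v).isLeft = true).card

/-- Weight (particle number) of a basis element. -/
def wtB (b : Bas ends) : ℕ :=
  (b.1.sum fun _ n => n) + ∑ v : V, Sum.elim (fun _ => 1) (fun t => cond t 1 0) (b.2 v)

/-- Value of the differential on a basis element: the signed sum over the
half-edge slots `h` of the substitutions `h ↦ e(h)` and `h ↦ v(h)`. -/
noncomputable def Db (b : Bas ends) : SC ends :=
  ∑ v : V,
    (match b.2 v with
      | Sum.inl h =>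
          sgn ends b.2 v •
            (Finsupp.single (b.1 + Finsupp.single h.1.1 1,
                Function.update b.2 v (Sum.inr false)) (1 : ℤ)
              - Finsupp.single (b.1, Function.update b.2 v (Sum.inr true)) (1 : ℤ))
      | Sum.inr _ => 0)

/-- The differential of the Świątkowski complex. -/
noncomputable def D : SC ends →ₗ[ℤ] SC ends :=
  Finsupp.linearCombination ℤ (Db ends)

/-- The subgroup of chains of pure homological degree `i` and weight `k`. -/
noncomputable def hasDW (i k : ℕ) : Submodule ℤ (SC ends) where
  carrier := {x | ∀ b ∈ x.support, degB ends b = i ∧ wtB ends b = k}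
  add_mem' := by
    intro x y hx hy b hb
    rcases Finset.mem_union.mp (Finsupp.support_add hb) with h | h
    exacts [hx b h, hy b h]
  zero_mem' := by simp
  smul_mem' := by
    intro c x hx b hb
    exact hx b (Finsupp.support_smul hb)

/-- Cycles of degree `i` and weight `k`. -/
noncomputable def cyc (i k : ℕ) : Submodule ℤ (SC ends) := LinearMap.ker (D ends) ⊓ hasDW ends i k

/-- Boundaries of degree `i` and weight `k` chains. -/
noncomputable def bdry (i k : ℕ) : Submodule ℤ (SC ends) := Submodule.map (D ends) (hasDW ends (i + 1) k)

/-- The homology `H_i(B_k Γ)` of the weight-`k` Świątkowski complex. -/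
noncomputable def Hgr (i k : ℕ) :=
  cyc ends i k ⧸ Submodule.comap (cyc ends i k).subtype (bdry ends i k)

noncomputable instance (i k : ℕ) : AddCommGroup (Hgr ends i k) :=
  inferInstanceAs (AddCommGroup
    (cyc ends i k ⧸ Submodule.comap (cyc ends i k).subtype (bdry ends i k)))

/-- Edge stabilization: multiplication by the edge `e`. -/
noncomputable def stab (e : E) : SC ends →ₗ[ℤ] SC ends :=
  Finsupp.lmapDomain ℤ ℤ fun b => (b.1 + Finsupp.single e 1, b.2)

end Swiatkowski

namespace K33

open Swiatkowski

/-- The complete bipartite graph `K₃,₃`, with vertices `(false, i) = aᵢ` and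
`(true, j) = bⱼ`, and edges `(i, j)` joining `aᵢ` to `bⱼ`. -/
def ends : Fin 3 × Fin 3 → (Bool × Fin 3) × (Bool × Fin 3) :=
  fun e => ((false, e.1), (true, e.2))

/-- The half-edge at the vertex `v` pointing towards the `t`-th vertex of the
opposite part. -/
def hAt (v : Bool × Fin 3) (t : Fin 3) : (Fin 3 × Fin 3) × Bool :=
  if v.1 then ((t, v.2), true) else ((v.2, t), false)

theorem hAt_vtx (v : Bool × Fin 3) (t : Fin 3) : vtx ends (hAt v t) = v := by
  rcases v with ⟨b, i⟩; cases b <;> rfl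

/-- The state placing the half-edge `hAt v t` at the vertex `v` and `∅` at all
other vertices. -/
def stateAt (v : Bool × Fin 3) (t : Fin 3) : States ends :=
  Function.update (fun w => (Sum.inr false : VGen ends w)) v
    (Sum.inl ⟨hAt v t, hAt_vtx v t⟩)

/-- The degree-one basis chain of the half-edge `hAt v t`. -/
noncomputable def sA (v : Bool × Fin 3) (t : Fin 3) : SC ends :=
  Finsupp.single ((0 : (Fin 3 × Fin 3) →₀ ℕ), stateAt v t) (1 : ℤ)

/-- The star cycle at a (trivalent) vertex `v` of `K₃,₃`, for the ordering of
its three half-edges given by the permutation `σ`: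
`e₃(h₁ − h₂) + e₂(h₃ − h₁) + e₁(h₂ − h₃)`. -/
noncomputable def st (v : Bool × Fin 3) (σ : Equiv.Perm (Fin 3)) : SC ends :=
  stab ends (hAt v (σ 2)).1 (sA v (σ 0) - sA v (σ 1))
    + stab ends (hAt v (σ 1)).1 (sA v (σ 2) - sA v (σ 0))
    + stab ends (hAt v (σ 0)).1 (sA v (σ 1) - sA v (σ 2))

-- ================= auxiliary development =================

/-- Sign comparing the enumeration positions of two vertices. -/
noncomputable def eps (v w : Bool × Fin 3) : ℤ := if idx w < idx v then -1 else 1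

lemma eps_mul_self (v w : Bool × Fin 3) : eps v w * eps v w = 1 := by
  unfold eps; split <;> norm_num

lemma eps_skew {v w : Bool × Fin 3} (hvw : v ≠ w) : eps w v = -eps v w := by
  unfold eps
  rcases lt_trichotomy (idx v) (idx w) with h | h | h
  · rw [if_pos h, if_neg (not_lt.mpr h.le)]
  · exact absurd ((Fintype.equivFin _).injective (Fin.ext h)) hvw
  · rw [if_neg (not_lt.mpr h.le), if_pos h]; norm_num

/-- The basis chain with the vertex generator at `v` and the half-edge
`hAt w t` at `w`. -/
noncomputable def TA (v w : Bool × Fin 3) (t : Fin 3) : SC ends :=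
  Finsupp.single ((0 : (Fin 3 × Fin 3) →₀ ℕ),
    Function.update (stateAt w t) v (Sum.inr true)) (1 : ℤ)

/-- The state with half-edge `hAt v s` at `v` and half-edge `hAt w t` at `w`. -/
noncomputable def pairState (v w : Bool × Fin 3) (s t : Fin 3) : States ends :=
  Function.update (stateAt w t) v (Sum.inl ⟨hAt v s, hAt_vtx v s⟩)

/-- The degree-2 weight-2 chain `±(hAt v s)·(hAt w t)`, normalized by the
Koszul sign. -/
noncomputable def P (v w : Bool × Fin 3) (s t : Fin 3) : SC ends :=
  eps v w • Finsupp.single ((0 : (Fin 3 × Fin 3) →₀ ℕ), pairState v w s t) (1 : ℤ)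

lemma stateAt_apply_self (w : Bool × Fin 3) (t : Fin 3) :
    stateAt w t w = Sum.inl ⟨hAt w t, hAt_vtx w t⟩ :=
  Function.update_self _ _ _

lemma stateAt_apply_ne (w : Bool × Fin 3) (t : Fin 3) {u : Bool × Fin 3} (h : u ≠ w) :
    stateAt w t u = Sum.inr false :=
  Function.update_of_ne h _ _

lemma pairState_apply_self (v w : Bool × Fin 3) (s t : Fin 3) :
    pairState v w s t v = Sum.inl ⟨hAt v s, hAt_vtx v s⟩ :=
  Function.update_self _ _ _

lemma pairState_apply_snd {v w : Bool × Fin 3} (hvw : v ≠ w) (s t : Fin 3) :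
    pairState v w s t w = Sum.inl ⟨hAt w t, hAt_vtx w t⟩ := by
  rw [pairState, Function.update_of_ne (Ne.symm hvw), stateAt_apply_self]

lemma pairState_apply_ne {v w u : Bool × Fin 3} (hv : u ≠ v) (hw : u ≠ w) (s t : Fin 3) :
    pairState v w s t u = Sum.inr false := by
  rw [pairState, Function.update_of_ne hv, stateAt_apply_ne _ _ hw]

lemma pairState_isLeft {v w : Bool × Fin 3} (hvw : v ≠ w) (s t : Fin 3) (u : Bool × Fin 3) :
    (pairState v w s t u).isLeft = true ↔ u = v ∨ u = w := by
  rcases eq_or_ne u v with rfl | hv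
  · simp [pairState_apply_self]
  · rcases eq_or_ne u w with rfl | hw
    · simp [pairState_apply_snd hvw]
    · simp [pairState_apply_ne hv hw, hv, hw]

lemma sgn_eq {v w : Bool × Fin 3} (hvw : v ≠ w) (F : States ends)
    (hF : ∀ u, (F u).isLeft = true ↔ u = v ∨ u = w) :
    sgn ends F v = eps v w := by
  unfold sgn eps
  have hfil : (Finset.univ.filter fun u => idx u < idx v ∧ (F u).isLeft = true)
      = if idx w < idx v then {w} else ∅ := by
    split
    next h =>
      ext u
      simp only [Finset.mem_filter, Finset.mem_univ, true_and, hF u, Finset.mem_singleton]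
      constructor
      · rintro ⟨hlt, rfl | rfl⟩
        · exact absurd hlt (lt_irrefl _)
        · rfl
      · rintro rfl; exact ⟨h, Or.inr rfl⟩
    next h =>
      ext u
      simp only [Finset.mem_filter, Finset.mem_univ, true_and, hF u,
        Finset.notMem_empty, iff_false, not_and]
      rintro hlt (rfl | rfl)
      · exact absurd hlt (lt_irrefl _)
      · exact h hlt
  rw [hfil]
  split <;> simp

lemma sgn_pair_fst {v w : Bool × Fin 3} (hvw : v ≠ w) (s t : Fin 3) :
    sgn ends (pairState v w s t) v = eps v w :=
  sgn_eq hvw _ (pairState_isLeft hvw s t)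

lemma sgn_pair_snd {v w : Bool × Fin 3} (hvw : v ≠ w) (s t : Fin 3) :
    sgn ends (pairState v w s t) w = eps w v :=
  sgn_eq (Ne.symm hvw) _ (fun u => (pairState_isLeft hvw s t u).trans or_comm)

lemma update_pair_fst_false {v w : Bool × Fin 3} (hvw : v ≠ w) (s t : Fin 3) :
    Function.update (pairState v w s t) v (Sum.inr false) = stateAt w t := by
  funext u
  rcases eq_or_ne u v with rfl | hv
  · rw [Function.update_self, stateAt_apply_ne _ _ hvw]
  · rw [Function.update_of_ne hv]
    rw [pairState, Function.update_of_ne hv]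

lemma update_pair_fst_true (v w : Bool × Fin 3) (s t : Fin 3) :
    Function.update (pairState v w s t) v (Sum.inr true)
      = Function.update (stateAt w t) v (Sum.inr true) := by
  rw [pairState, Function.update_idem]

lemma update_pair_snd_false {v w : Bool × Fin 3} (hvw : v ≠ w) (s t : Fin 3) :
    Function.update (pairState v w s t) w (Sum.inr false) = stateAt v s := by
  funext u
  rcases eq_or_ne u w with rfl | hw
  · rw [Function.update_self, stateAt_apply_ne _ _ (Ne.symm hvw)]
  · rw [Function.update_of_ne hw]
    rcases eq_or_ne u v with rfl | hv
    · rw [pairState_apply_self, stateAt_apply_self]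
    · rw [pairState_apply_ne hv hw, stateAt_apply_ne _ _ hv]

lemma update_pair_snd_true {v w : Bool × Fin 3} (hvw : v ≠ w) (s t : Fin 3) :
    Function.update (pairState v w s t) w (Sum.inr true)
      = Function.update (stateAt v s) w (Sum.inr true) := by
  funext u
  rcases eq_or_ne u w with rfl | hw
  · rw [Function.update_self, Function.update_self]
  · rw [Function.update_of_ne hw, Function.update_of_ne hw]
    rcases eq_or_ne u v with rfl | hv
    · rw [pairState_apply_self, stateAt_apply_self]
    · rw [pairState_apply_ne hv hw, stateAt_apply_ne _ _ hv]

lemma stab_sA (e : Fin 3 × Fin 3) (w : Bool × Fin 3) (t : Fin 3) :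
    stab ends e (sA w t)
      = Finsupp.single ((Finsupp.single e 1 : (Fin 3 × Fin 3) →₀ ℕ), stateAt w t) (1 : ℤ) := by
  rw [sA, stab, Finsupp.lmapDomain_apply, Finsupp.mapDomain_single, zero_add]

lemma D_P {v w : Bool × Fin 3} (hvw : v ≠ w) (s t : Fin 3) :
    D ends (P v w s t)
      = stab ends (hAt v s).1 (sA w t) - TA v w t
        - stab ends (hAt w t).1 (sA v s) + TA w v s := by
  have hDb : D ends (Finsupp.single ((0 : (Fin 3 × Fin 3) →₀ ℕ), pairState v w s t) (1 : ℤ))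
      = Db ends ((0 : (Fin 3 × Fin 3) →₀ ℕ), pairState v w s t) := by
    rw [D, Finsupp.linearCombination_single, one_smul]
  rw [P, map_smul, hDb, Db]
  rw [← Finset.sum_subset (Finset.subset_univ ({v, w} : Finset (Bool × Fin 3)))
    (fun u _ hu => ?_)]
  · rw [Finset.sum_pair hvw]
    rw [show ((0 : (Fin 3 × Fin 3) →₀ ℕ), pairState v w s t).2 = pairState v w s t from rfl]
    simp only [pairState_apply_self, pairState_apply_snd hvw]
    simp only [sgn_pair_fst hvw, sgn_pair_snd hvw, update_pair_fst_false hvw,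
      update_pair_fst_true, update_pair_snd_false hvw, update_pair_snd_true hvw,
      stab_sA, TA, zero_add]
    rw [eps_skew hvw]
    rw [smul_add, smul_smul, eps_mul_self, one_smul, neg_smul, smul_neg, smul_smul,
      eps_mul_self, one_smul]
    abel
  · have hv : u ≠ v := fun h => hu (by simp [h])
    have hw : u ≠ w := fun h => hu (by simp [h])
    rw [show ((0 : (Fin 3 × Fin 3) →₀ ℕ), pairState v w s t).2 = pairState v w s t from rfl]
    rw [pairState_apply_ne hv hw]

lemma hAt_a (i s : Fin 3) : (hAt (false, i) s).1 = (i, s) := rfl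

lemma hAt_b (j t : Fin 3) : (hAt (true, j) t).1 = (t, j) := rfl

lemma degB_pair {v w : Bool × Fin 3} (hvw : v ≠ w) (s t : Fin 3) :
    degB ends ((0 : (Fin 3 × Fin 3) →₀ ℕ), pairState v w s t) = 2 := by
  unfold degB
  have hfil : (Finset.univ.filter fun u => ((pairState v w s t) u).isLeft = true)
      = {v, w} := by
    ext u
    simp [pairState_isLeft hvw s t u]
  rw [show ((0 : (Fin 3 × Fin 3) →₀ ℕ), pairState v w s t).2 = pairState v w s t from rfl,
    hfil, Finset.card_pair hvw]

lemma wtB_pair {v w : Bool × Fin 3} (hvw : v ≠ w) (s t : Fin 3) :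
    wtB ends ((0 : (Fin 3 × Fin 3) →₀ ℕ), pairState v w s t) = 2 := by
  unfold wtB
  rw [show ((0 : (Fin 3 × Fin 3) →₀ ℕ), pairState v w s t).2 = pairState v w s t from rfl,
    show ((0 : (Fin 3 × Fin 3) →₀ ℕ), pairState v w s t).1 = 0 from rfl]
  rw [Finsupp.sum_zero_index, zero_add]
  rw [← Finset.sum_subset (Finset.subset_univ ({v, w} : Finset (Bool × Fin 3)))
    (fun u _ hu => ?_)]
  · rw [Finset.sum_pair hvw, pairState_apply_self, pairState_apply_snd hvw]
    rfl
  · have hv : u ≠ v := fun h => hu (by simp [h])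
    have hw : u ≠ w := fun h => hu (by simp [h])
    rw [pairState_apply_ne hv hw]
    rfl

lemma P_mem {v w : Bool × Fin 3} (hvw : v ≠ w) (s t : Fin 3) :
    P v w s t ∈ hasDW ends 2 2 := by
  refine Submodule.smul_mem _ _ ?_
  show ∀ b ∈ (Finsupp.single ((0 : (Fin 3 × Fin 3) →₀ ℕ), pairState v w s t)
    (1 : ℤ)).support, degB ends b = 2 ∧ wtB ends b = 2
  intro b hb
  have hb' : b = ((0 : (Fin 3 × Fin 3) →₀ ℕ), pairState v w s t) := by
    have := Finsupp.support_single_subset hb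
    simpa using this
  subst hb'
  exact ⟨degB_pair hvw s t, wtB_pair hvw s t⟩

lemma st_apply (v : Bool × Fin 3) (σ : Equiv.Perm (Fin 3)) (i0 i1 i2 : Fin 3)
    (h0 : σ 0 = i0) (h1 : σ 1 = i1) (h2 : σ 2 = i2) :
    st v σ = stab ends (hAt v i2).1 (sA v i0 - sA v i1)
      + stab ends (hAt v i1).1 (sA v i2 - sA v i0)
      + stab ends (hAt v i0).1 (sA v i1 - sA v i2) := by
  rw [st, h0, h1, h2]

lemma st_swap12 (v : Bool × Fin 3) : st v (Equiv.swap 1 2) = -st v 1 := by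
  rw [st_apply v (Equiv.swap 1 2) 0 2 1 (by decide) (by decide) (by decide),
    st_apply v 1 0 1 2 (by decide) (by decide) (by decide)]
  simp only [map_sub]
  abel

lemma st_swap01 (v : Bool × Fin 3) : st v (Equiv.swap 0 1) = -st v 1 := by
  rw [st_apply v (Equiv.swap 0 1) 1 0 2 (by decide) (by decide) (by decide),
    st_apply v 1 0 1 2 (by decide) (by decide) (by decide)]
  simp only [map_sub]
  abel

lemma st_swap02 (v : Bool × Fin 3) : st v (Equiv.swap 0 2) = -st v 1 := by
  rw [st_apply v (Equiv.swap 0 2) 2 1 0 (by decide) (by decide) (by decide),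
    st_apply v 1 0 1 2 (by decide) (by decide) (by decide)]
  simp only [map_sub]
  abel

lemma st_cyc1 (v : Bool × Fin 3) : st v (Equiv.swap 0 1 * Equiv.swap 1 2) = st v 1 := by
  rw [st_apply v (Equiv.swap 0 1 * Equiv.swap 1 2) 1 2 0 (by decide) (by decide) (by decide),
    st_apply v 1 0 1 2 (by decide) (by decide) (by decide)]
  simp only [map_sub]
  abel

lemma st_cyc2 (v : Bool × Fin 3) : st v (Equiv.swap 0 2 * Equiv.swap 1 2) = st v 1 := by
  rw [st_apply v (Equiv.swap 0 2 * Equiv.swap 1 2) 2 0 1 (by decide) (by decide) (by decide),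
    st_apply v 1 0 1 2 (by decide) (by decide) (by decide)]
  simp only [map_sub]
  abel

/-- A permutation sending `0` to `j` which fixes star cycles. -/
def pσ : Fin 3 → Equiv.Perm (Fin 3) :=
  ![1, Equiv.swap 0 1 * Equiv.swap 1 2, Equiv.swap 0 2 * Equiv.swap 1 2]

/-- A permutation sending `0` to `j` which negates star cycles. -/
def nσ : Fin 3 → Equiv.Perm (Fin 3) :=
  ![Equiv.swap 1 2, Equiv.swap 0 1, Equiv.swap 0 2]

lemma pσ_zero (j : Fin 3) : pσ j 0 = j := by fin_cases j <;> decide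

lemma nσ_zero (j : Fin 3) : nσ j 0 = j := by fin_cases j <;> decide

lemma st_pσ (u : Bool × Fin 3) (j : Fin 3) : st u (pσ j) = st u 1 := by
  fin_cases j
  · rfl
  · exact st_cyc1 u
  · exact st_cyc2 u

lemma st_nσ (u : Bool × Fin 3) (j : Fin 3) : st u (nσ j) = -st u 1 := by
  fin_cases j
  · exact st_swap12 u
  · exact st_swap01 u
  · exact st_swap02 u

set_option maxRecDepth 100000 in
set_option maxHeartbeats 4000000 in
lemma star_rel (p r : Equiv.Perm (Fin 3)) :
    st (false, p 0) r - st (true, r 0) p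
      ∈ Submodule.map (D ends) (hasDW ends 2 2) := by
  have hab : ∀ (i j : Fin 3), ((false, p i) : Bool × Fin 3) ≠ (true, r j) := by
    intro i j h
    exact Bool.noConfusion (congrArg Prod.fst h)
  have hp : ∀ {k l : Fin 3}, k ≠ l → ((false, p k) : Bool × Fin 3) ≠ (false, p l) :=
    fun h hc => h (p.injective (congrArg Prod.snd hc))
  have hr : ∀ {k l : Fin 3}, k ≠ l → ((true, r k) : Bool × Fin 3) ≠ (true, r l) :=
    fun h hc => h (r.injective (congrArg Prod.snd hc))
  refine Submodule.mem_map.mpr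
    ⟨P (false, p 0) (false, p 1) (r 0) (r 0)
        - P (false, p 0) (false, p 1) (r 0) (r 2)
        - P (false, p 0) (false, p 2) (r 0) (r 0)
        + P (false, p 0) (false, p 2) (r 0) (r 1)
        - P (false, p 0) (true, r 0) (r 0) (p 1)
        + P (false, p 0) (true, r 0) (r 0) (p 2)
        + P (false, p 0) (true, r 1) (r 0) (p 0)
        - P (false, p 0) (true, r 1) (r 0) (p 2)
        - P (false, p 0) (true, r 2) (r 0) (p 0)
        + P (false, p 0) (true, r 2) (r 0) (p 1)
        - P (false, p 0) (false, p 1) (r 1) (r 0)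
        + P (false, p 0) (false, p 1) (r 1) (r 2)
        - P (false, p 0) (true, r 0) (r 1) (p 0)
        + P (false, p 0) (true, r 0) (r 1) (p 1)
        + P (false, p 0) (true, r 2) (r 1) (p 0)
        - P (false, p 0) (true, r 2) (r 1) (p 1)
        + P (false, p 0) (false, p 2) (r 2) (r 0)
        - P (false, p 0) (false, p 2) (r 2) (r 1)
        + P (false, p 0) (true, r 0) (r 2) (p 0)
        - P (false, p 0) (true, r 0) (r 2) (p 2)
        - P (false, p 0) (true, r 1) (r 2) (p 0)
        + P (false, p 0) (true, r 1) (r 2) (p 2)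
        + P (false, p 1) (false, p 2) (r 0) (r 0)
        - P (false, p 1) (false, p 2) (r 0) (r 1)
        + P (false, p 1) (true, r 0) (r 0) (p 0)
        - P (false, p 1) (true, r 0) (r 0) (p 2)
        - P (false, p 1) (true, r 1) (r 0) (p 0)
        + P (false, p 1) (true, r 1) (r 0) (p 2)
        - P (false, p 1) (false, p 2) (r 2) (r 0)
        + P (false, p 1) (false, p 2) (r 2) (r 1)
        - P (false, p 1) (true, r 0) (r 2) (p 0)
        + P (false, p 1) (true, r 0) (r 2) (p 2)
        + P (false, p 1) (true, r 1) (r 2) (p 0)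
        - P (false, p 1) (true, r 1) (r 2) (p 2)
        - P (false, p 2) (true, r 0) (r 0) (p 0)
        + P (false, p 2) (true, r 0) (r 0) (p 1)
        + P (false, p 2) (true, r 2) (r 0) (p 0)
        - P (false, p 2) (true, r 2) (r 0) (p 1)
        + P (false, p 2) (true, r 0) (r 1) (p 0)
        - P (false, p 2) (true, r 0) (r 1) (p 1)
        - P (false, p 2) (true, r 2) (r 1) (p 0)
        + P (false, p 2) (true, r 2) (r 1) (p 1)
        - P (true, r 0) (true, r 1) (p 0) (p 0)
        + P (true, r 0) (true, r 1) (p 0) (p 2)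
        + P (true, r 0) (true, r 2) (p 0) (p 0)
        - P (true, r 0) (true, r 2) (p 0) (p 1)
        + P (true, r 0) (true, r 1) (p 1) (p 0)
        - P (true, r 0) (true, r 1) (p 1) (p 2)
        - P (true, r 0) (true, r 2) (p 2) (p 0)
        + P (true, r 0) (true, r 2) (p 2) (p 1)
        - P (true, r 1) (true, r 2) (p 0) (p 0)
        + P (true, r 1) (true, r 2) (p 0) (p 1)
        + P (true, r 1) (true, r 2) (p 2) (p 0)
        - P (true, r 1) (true, r 2) (p 2) (p 1),
     ?_, ?_⟩
  · have h01 : (0 : Fin 3) ≠ 1 := by decide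
    have h02 : (0 : Fin 3) ≠ 2 := by decide
    have h12 : (1 : Fin 3) ≠ 2 := by decide
    exact
      (sub_mem (add_mem (add_mem (sub_mem (add_mem (sub_mem (sub_mem (add_mem (sub_mem (add_mem (add_mem (sub_mem (add_mem (sub_mem (sub_mem (add_mem (sub_mem (add_mem (add_mem (sub_mem (sub_mem (add_mem (add_mem (sub_mem (add_mem (sub_mem (add_mem (sub_mem (sub_mem (add_mem (sub_mem (add_mem (add_mem (sub_mem (sub_mem (add_mem (sub_mem (add_mem (sub_mem (add_mem (add_mem (sub_mem (add_mem (sub_mem (add_mem (sub_mem (sub_mem (add_mem (add_mem (sub_mem (add_mem (sub_mem (sub_mem (P_mem (hp h01) _ _)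
      (P_mem (hp h01) _ _))
      (P_mem (hp h02) _ _))
      (P_mem (hp h02) _ _))
      (P_mem (hab 0 0) _ _))
      (P_mem (hab 0 0) _ _))
      (P_mem (hab 0 1) _ _))
      (P_mem (hab 0 1) _ _))
      (P_mem (hab 0 2) _ _))
      (P_mem (hab 0 2) _ _))
      (P_mem (hp h01) _ _))
      (P_mem (hp h01) _ _))
      (P_mem (hab 0 0) _ _))
      (P_mem (hab 0 0) _ _))
      (P_mem (hab 0 2) _ _))
      (P_mem (hab 0 2) _ _))
      (P_mem (hp h02) _ _))
      (P_mem (hp h02) _ _))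
      (P_mem (hab 0 0) _ _))
      (P_mem (hab 0 0) _ _))
      (P_mem (hab 0 1) _ _))
      (P_mem (hab 0 1) _ _))
      (P_mem (hp h12) _ _))
      (P_mem (hp h12) _ _))
      (P_mem (hab 1 0) _ _))
      (P_mem (hab 1 0) _ _))
      (P_mem (hab 1 1) _ _))
      (P_mem (hab 1 1) _ _))
      (P_mem (hp h12) _ _))
      (P_mem (hp h12) _ _))
      (P_mem (hab 1 0) _ _))
      (P_mem (hab 1 0) _ _))
      (P_mem (hab 1 1) _ _))
      (P_mem (hab 1 1) _ _))
      (P_mem (hab 2 0) _ _))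
      (P_mem (hab 2 0) _ _))
      (P_mem (hab 2 2) _ _))
      (P_mem (hab 2 2) _ _))
      (P_mem (hab 2 0) _ _))
      (P_mem (hab 2 0) _ _))
      (P_mem (hab 2 2) _ _))
      (P_mem (hab 2 2) _ _))
      (P_mem (hr h01) _ _))
      (P_mem (hr h01) _ _))
      (P_mem (hr h02) _ _))
      (P_mem (hr h02) _ _))
      (P_mem (hr h01) _ _))
      (P_mem (hr h01) _ _))
      (P_mem (hr h02) _ _))
      (P_mem (hr h02) _ _))
      (P_mem (hr h12) _ _))
      (P_mem (hr h12) _ _))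
      (P_mem (hr h12) _ _))
      (P_mem (hr h12) _ _))
  · simp only [map_add, map_sub, map_neg,
      D_P (hp (show (0:Fin 3) ≠ 1 by decide)),
      D_P (hp (show (0:Fin 3) ≠ 2 by decide)),
      D_P (hab 0 0),
      D_P (hab 0 1),
      D_P (hab 0 2),
      D_P (hp (show (1:Fin 3) ≠ 2 by decide)),
      D_P (hab 1 0),
      D_P (hab 1 1),
      D_P (hab 2 0),
      D_P (hab 2 2),
      D_P (hr (show (0:Fin 3) ≠ 1 by decide)),
      D_P (hr (show (0:Fin 3) ≠ 2 by decide)),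
      D_P (hr (show (1:Fin 3) ≠ 2 by decide))]
    rw [st_apply (false, p 0) r (r 0) (r 1) (r 2) rfl rfl rfl,
      st_apply (true, r 0) p (p 0) (p 1) (p 2) rfl rfl rfl]
    simp only [hAt_a, hAt_b, map_sub]
    abel

lemma xy_mem (i j : Fin 3) : st (false, i) 1 - st (true, j) 1
    ∈ Submodule.map (D ends) (hasDW ends 2 2) := by
  have h := star_rel (pσ i) (pσ j)
  rwa [pσ_zero, pσ_zero, st_pσ, st_pσ] at h

lemma xy'_mem (i j : Fin 3) : st (false, i) 1 + st (true, j) 1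
    ∈ Submodule.map (D ends) (hasDW ends 2 2) := by
  have h := star_rel (nσ i) (pσ j)
  rwa [nσ_zero, pσ_zero, st_pσ, st_nσ, sub_neg_eq_add] at h

lemma yx_mem (j i : Fin 3) : st (true, j) 1 - st (false, i) 1
    ∈ Submodule.map (D ends) (hasDW ends 2 2) := by
  have h := Submodule.neg_mem _ (xy_mem i j)
  rwa [neg_sub] at h

lemma xx_mem (i i' : Fin 3) : st (false, i) 1 - st (false, i') 1
    ∈ Submodule.map (D ends) (hasDW ends 2 2) := by
  have h := Submodule.sub_mem _ (xy_mem i 0) (xy_mem i' 0)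
  have e : st (false, i) 1 - st (true, 0) 1 - (st (false, i') 1 - st (true, 0) 1)
      = st (false, i) 1 - st (false, i') 1 := by abel
  rwa [e] at h

lemma yy_mem (j j' : Fin 3) : st (true, j) 1 - st (true, j') 1
    ∈ Submodule.map (D ends) (hasDW ends 2 2) := by
  have h := Submodule.sub_mem _ (xy_mem 0 j') (xy_mem 0 j)
  have e : st (false, 0) 1 - st (true, j') 1 - (st (false, 0) 1 - st (true, j) 1)
      = st (true, j) 1 - st (true, j') 1 := by abel
  rwa [e] at h

lemma tx_mem (i : Fin 3) : (2 : ℤ) • st (false, i) 1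
    ∈ Submodule.map (D ends) (hasDW ends 2 2) := by
  have h := Submodule.add_mem _ (xy_mem i 0) (xy'_mem i 0)
  have e : st (false, i) 1 - st (true, 0) 1 + (st (false, i) 1 + st (true, 0) 1)
      = (2 : ℤ) • st (false, i) 1 := by abel
  rwa [e] at h

lemma ty_mem (j : Fin 3) : (2 : ℤ) • st (true, j) 1
    ∈ Submodule.map (D ends) (hasDW ends 2 2) := by
  have h := Submodule.sub_mem _ (xy'_mem 0 j) (xy_mem 0 j)
  have e : st (false, 0) 1 + st (true, j) 1 - (st (false, 0) 1 - st (true, j) 1)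
      = (2 : ℤ) • st (true, j) 1 := by abel
  rwa [e] at h

/-- The normal form of a star cycle modulo boundaries. -/
noncomputable def nn (u : Bool × Fin 3) (σ : Equiv.Perm (Fin 3)) : SC ends :=
  cond u.1 (st (false, σ 0) 1) (st (true, σ 0) 1)

lemma red_mem (u : Bool × Fin 3) (σ : Equiv.Perm (Fin 3)) :
    st u σ - nn u σ ∈ Submodule.map (D ends) (hasDW ends 2 2) := by
  obtain ⟨b, i⟩ := u
  cases b
  · show st (false, i) σ - st (true, σ 0) 1 ∈ _
    have h := star_rel (pσ i) σ
    rwa [pσ_zero, st_pσ] at h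
  · show st (true, i) σ - st (false, σ 0) 1 ∈ _
    have h := star_rel σ (pσ i)
    rw [pσ_zero, st_pσ] at h
    have h' := Submodule.neg_mem _ h
    rwa [neg_sub] at h'

lemma nn_diff_mem (u u' : Bool × Fin 3) (σ σ' : Equiv.Perm (Fin 3)) :
    nn u σ - nn u' σ' ∈ Submodule.map (D ends) (hasDW ends 2 2) := by
  obtain ⟨b, i⟩ := u
  obtain ⟨b', i'⟩ := u'
  cases b <;> cases b'
  · exact yy_mem (σ 0) (σ' 0)
  · exact yx_mem (σ 0) (σ' 0)
  · exact xy_mem (σ 0) (σ' 0)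
  · exact xx_mem (σ 0) (σ' 0)

lemma nn_tors_mem (u : Bool × Fin 3) (σ : Equiv.Perm (Fin 3)) :
    (2 : ℤ) • nn u σ ∈ Submodule.map (D ends) (hasDW ends 2 2) := by
  obtain ⟨b, i⟩ := u
  cases b
  · exact ty_mem (σ 0)
  · exact tx_mem (σ 0)

lemma diff_mem (u u' : Bool × Fin 3) (σ σ' : Equiv.Perm (Fin 3)) :
    st u σ - st u' σ' ∈ Submodule.map (D ends) (hasDW ends 2 2) := by
  have h := Submodule.add_mem _
    (Submodule.sub_mem _ (red_mem u σ) (red_mem u' σ')) (nn_diff_mem u u' σ σ')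
  have e : st u σ - nn u σ - (st u' σ' - nn u' σ') + (nn u σ - nn u' σ')
      = st u σ - st u' σ' := by abel
  rwa [e] at h

lemma tors_mem (u : Bool × Fin 3) (σ : Equiv.Perm (Fin 3)) :
    (2 : ℤ) • st u σ ∈ Submodule.map (D ends) (hasDW ends 2 2) := by
  have h := Submodule.add_mem _
    (Submodule.smul_mem _ (2 : ℤ) (red_mem u σ)) (nn_tors_mem u σ)
  have e : (2 : ℤ) • (st u σ - nn u σ) + (2 : ℤ) • nn u σ = (2 : ℤ) • st u σ := by
    rw [smul_sub]; abel
  rwa [e] at h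

/-- Any two star classes in `H₁(B₂(K₃,₃))` are equal,
regardless of the choice of vertex, of half-edges, and of orientation: the
difference of any two star cycles is the boundary of a degree-2, weight-2
chain of the Świątkowski complex of `K₃,₃`.  In particular every star class is
2-torsion. -/
theorem all_star_classes_equal :
    (∀ (v v' : Bool × Fin 3) (σ σ' : Equiv.Perm (Fin 3)),
      ∃ z ∈ hasDW ends 2 2, D ends z = st v σ - st v' σ') ∧
    (∀ (v : Bool × Fin 3) (σ : Equiv.Perm (Fin 3)),
      ∃ z ∈ hasDW ends 2 2, D ends z = (2 : ℤ) • st v σ) := by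
  constructor
  · intro v v' σ σ'
    exact Submodule.mem_map.mp (diff_mem v v' σ σ')
  · intro v σ
    exact Submodule.mem_map.mp (tors_mem v σ)

end K33
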